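/- arXiv:1606.07635 — 2 statements merged into one kernel-verified Lean document; each statement's English description precedes it below -/
import Mathlib

section
/- A density matrix ρ on (ℂ²)^{⊗N}, equal to its projection onto the symmetric subspace, is fully separable if and only if there exist finitely many weights w_i ≥ 0 and unit vectors |α_i⟩ ∈ ℂ² such that ρ = Σ_i w_i (|α_i⟩⟨α_i|)^{⊗N}. -/
open Matrix ComplexOrder

/-- Tensor product of `N` one-qubit operators, as a matrix on `(ℂ²)^{⊗N}`. -/
def tensorProd {N : ℕ} (M : Fin N → Matrix (Fin 2) (Fin 2) ℂ) :
    Matrix (Fin N → Fin 2) (Fin N → Fin 2) ℂ :=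
  Matrix.of fun x y => ∏ k, M k (x k) (y k)

/-- The permutation operator on `(ℂ²)^{⊗N}` sending `ψ` to `x ↦ ψ (x ∘ σ)`. -/
def permOp (N : ℕ) (σ : Equiv.Perm (Fin N)) :
    Matrix (Fin N → Fin 2) (Fin N → Fin 2) ℂ :=
  Matrix.of fun x y => if y = x ∘ σ then 1 else 0

/-- The orthogonal projector onto the symmetric subspace of `(ℂ²)^{⊗N}`. -/
noncomputable def symProj (N : ℕ) : Matrix (Fin N → Fin 2) (Fin N → Fin 2) ℂ :=
  ((N.factorial : ℂ))⁻¹ • ∑ σ : Equiv.Perm (Fin N), permOp N σ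

lemma psd_sum_rank_one {n : ℕ} {A : Matrix (Fin n) (Fin n) ℂ} (hA : A.PosSemidef) :
    ∃ (e : Fin n → ℝ) (u : Fin n → Fin n → ℂ),
      (∀ j, 0 ≤ e j) ∧ (∀ j, star (u j) ⬝ᵥ u j = 1) ∧
      A = ∑ j, (e j : ℂ) • vecMulVec (u j) (star (u j)) := by
  have hU := hA.1.eigenvectorUnitary.2
  refine ⟨hA.1.eigenvalues, fun j x => (hA.1.eigenvectorUnitary : Matrix (Fin n) (Fin n) ℂ) x j,
    hA.eigenvalues_nonneg, ?_, ?_⟩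
  · intro j
    have h1 : (star (hA.1.eigenvectorUnitary : Matrix (Fin n) (Fin n) ℂ) *
        (hA.1.eigenvectorUnitary : Matrix (Fin n) (Fin n) ℂ)) j j = 1 := by
      rw [mem_unitaryGroup_iff'.mp hU]; simp
    rw [← h1]
    simp [mul_apply, dotProduct, conjTranspose_apply]
  · have h := hA.1.spectral_theorem
    refine h.trans ?_
    ext x y
    simp only [mul_apply, diagonal, vecMulVec, Matrix.sum_apply, conjTranspose_apply,
      Finset.sum_mul, Finset.mul_sum, of_apply, Pi.smul_apply, smul_eq_mul, Pi.star_apply,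
      Function.comp_apply, star_apply, Unitary.conjStarAlgAut_apply]
    rw [Finset.sum_comm]
    apply Finset.sum_congr rfl
    intro j _
    rw [Finset.sum_eq_single j]
    · simp only [if_true, Matrix.smul_apply, Matrix.of_apply, smul_eq_mul]
      rw [mul_right_comm, mul_comm]; rfl
    · intro b _ hb
      rw [if_neg (Ne.symm hb)]
      ring
    · simp

lemma permOp_mul (N : ℕ) (σ τ : Equiv.Perm (Fin N)) :
    permOp N σ * permOp N τ = permOp N (σ * τ) := by
  ext x y
  simp only [permOp, mul_apply, of_apply]
  rw [Finset.sum_eq_single (x ∘ σ)]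
  · rw [if_pos rfl, one_mul]
    have : (x ∘ ⇑σ) ∘ ⇑τ = x ∘ ⇑(σ * τ) := by
      funext k; simp [Equiv.Perm.mul_apply]
    rw [this]
  · intro b _ hb; rw [if_neg hb, zero_mul]
  · simp

lemma permOp_mul_symProj (N : ℕ) (σ : Equiv.Perm (Fin N)) :
    permOp N σ * symProj N = symProj N := by
  unfold symProj
  rw [mul_smul_comm, Finset.mul_sum]
  congr 1
  have := Equiv.sum_comp (Equiv.mulLeft σ) (fun τ => permOp N τ)
  simp only [Equiv.coe_mulLeft] at this
  rw [← this]
  exact Finset.sum_congr rfl fun τ _ => permOp_mul N σ τ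

lemma symProj_mul_permOp (N : ℕ) (σ : Equiv.Perm (Fin N)) :
    symProj N * permOp N σ = symProj N := by
  unfold symProj
  rw [smul_mul_assoc, Finset.sum_mul]
  congr 1
  have := Equiv.sum_comp (Equiv.mulRight σ) (fun τ => permOp N τ)
  simp only [Equiv.coe_mulRight] at this
  rw [← this]
  exact Finset.sum_congr rfl fun τ _ => permOp_mul N τ σ

lemma symProj_mul_self (N : ℕ) : symProj N * symProj N = symProj N := by
  nth_rewrite 1 [symProj]
  rw [smul_mul_assoc, Finset.sum_mul]
  have h : ∀ σ : Equiv.Perm (Fin N), σ ∈ Finset.univ → permOp N σ * symProj N = symProj N :=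
    fun σ _ => permOp_mul_symProj N σ
  rw [Finset.sum_congr rfl h, Finset.sum_const, Finset.card_univ, Fintype.card_perm,
    Fintype.card_fin]
  rw [← Nat.cast_smul_eq_nsmul ℂ, smul_smul, inv_mul_cancel₀]
  · exact one_smul _ _
  · exact_mod_cast Nat.factorial_ne_zero N

lemma permOp_conjTranspose (N : ℕ) (σ : Equiv.Perm (Fin N)) :
    (permOp N σ)ᴴ = permOp N σ⁻¹ := by
  ext x y
  simp only [permOp, conjTranspose_apply, of_apply]
  have h : (x = y ∘ σ) ↔ (y = x ∘ ⇑σ⁻¹) := by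
    constructor
    · rintro rfl; funext k
      simp [Function.comp]
    · rintro rfl; funext k
      simp [Function.comp]
  by_cases hc : x = y ∘ σ
  · rw [if_pos hc, if_pos (h.mp hc)]; simp
  · rw [if_neg hc, if_neg (fun hy => hc (h.mpr hy))]; simp

lemma symProj_conjTranspose (N : ℕ) : (symProj N)ᴴ = symProj N := by
  unfold symProj
  rw [conjTranspose_smul, conjTranspose_sum]
  congr 1
  · simp [star_inv₀]
  · rw [← Equiv.sum_comp (Equiv.inv (Equiv.Perm (Fin N))) (fun τ => permOp N τ)]
    exact Finset.sum_congr rfl fun τ _ => permOp_conjTranspose N τ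

lemma permOp_mulVec (N : ℕ) (σ : Equiv.Perm (Fin N)) (v : (Fin N → Fin 2) → ℂ) :
    permOp N σ *ᵥ v = fun x => v (x ∘ σ) := by
  funext x
  simp [permOp, mulVec, dotProduct]

lemma conj_outer {I : Type*} [Fintype I] [DecidableEq I] (Q : Matrix I I ℂ) (hQ : Qᴴ = Q)
    (v : I → ℂ) :
    Q * vecMulVec v (star v) * Q = vecMulVec (Q *ᵥ v) (star (Q *ᵥ v)) := by
  rw [vecMulVec_eq Unit, vecMulVec_eq Unit, replicateCol_mulVec]
  have h : replicateRow Unit (star (Q *ᵥ v)) = replicateRow Unit (star v) * Q := by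
    rw [star_mulVec, hQ, replicateRow_vecMul]
  rw [h]
  simp only [← Matrix.mul_assoc]

lemma tensorProd_sum (N : ℕ) (A : Fin N → Fin 2 → Matrix (Fin 2) (Fin 2) ℂ) :
    tensorProd (fun k => ∑ j, A k j)
      = ∑ f : Fin N → Fin 2, tensorProd (fun k => A k (f k)) := by
  ext x y
  simp only [tensorProd, of_apply, Matrix.sum_apply]
  rw [Finset.prod_univ_sum, Fintype.piFinset_univ]

lemma tensorProd_smul_outer (N : ℕ) (c : Fin N → ℂ) (b : Fin N → Fin 2 → ℂ) :
    tensorProd (fun k => c k • vecMulVec (b k) (star (b k)))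
      = (∏ k, c k) • vecMulVec (fun x => ∏ k, b k (x k))
          (star (fun x : Fin N → Fin 2 => ∏ k, b k (x k))) := by
  ext x y
  simp only [tensorProd, of_apply, Matrix.smul_apply, vecMulVec_apply, Pi.star_apply,
    smul_eq_mul, star_prod]
  rw [Finset.prod_mul_distrib, Finset.prod_mul_distrib]

lemma unit_prod (N : ℕ) (b : Fin N → Fin 2 → ℂ) (hb : ∀ k, star (b k) ⬝ᵥ b k = 1) :
    star (fun x : Fin N → Fin 2 => ∏ k, b k (x k)) ⬝ᵥ (fun x => ∏ k, b k (x k)) = 1 := by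
  unfold dotProduct
  have : ∀ x : Fin N → Fin 2,
      (star fun x : Fin N → Fin 2 => ∏ k, b k (x k)) x * (∏ k, b k (x k))
      = ∏ k, (star (b k) (x k) * b k (x k)) := by
    intro x
    simp only [Pi.star_apply, star_prod, Finset.prod_mul_distrib]
  rw [Finset.sum_congr rfl fun x _ => this x]
  rw [← Fintype.piFinset_univ,
    ← Finset.prod_univ_sum (fun _ : Fin N => (Finset.univ : Finset (Fin 2)))
      (fun k s => star (b k) s * b k s)]
  rw [Finset.prod_eq_one]
  intro k _
  exact hb k

lemma outer_posSemidef {n : ℕ} (a : Fin n → ℂ) : (vecMulVec a (star a)).PosSemidef := by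
  have h := Matrix.posSemidef_conjTranspose_mul_self (replicateRow Unit (star a))
  rw [conjTranspose_replicateRow, star_star, ← vecMulVec_eq Unit] at h
  exact h

lemma outer_trace {n : ℕ} (a : Fin n → ℂ) (ha : star a ⬝ᵥ a = 1) :
    (vecMulVec a (star a)).trace = 1 := by
  rw [← ha]
  simp only [trace, diag, vecMulVec_apply, dotProduct, Pi.star_apply]
  apply Finset.sum_congr rfl
  intro i _
  ring

lemma unit_ne_zero {n : ℕ} {a : Fin n → ℂ} (ha : star a ⬝ᵥ a = 1) : ∃ s, a s ≠ 0 := by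
  by_contra h
  push_neg at h
  have : star a ⬝ᵥ a = 0 := by
    simp [dotProduct, h]
  rw [ha] at this
  exact one_ne_zero this

lemma symm_prod_outer (N : ℕ) (hN : 0 < N) (b : Fin N → Fin 2 → ℂ)
    (hb : ∀ k, star (b k) ⬝ᵥ b k = 1)
    (hsymm : ∀ (σ : Equiv.Perm (Fin N)) (x : Fin N → Fin 2),
      (∏ k, b k ((x ∘ ⇑σ) k)) = ∏ k, b k (x k)) :
    vecMulVec (fun x : Fin N → Fin 2 => ∏ k, b k (x k))
        (star (fun x : Fin N → Fin 2 => ∏ k, b k (x k)))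
      = tensorProd (fun _ => vecMulVec (b ⟨0, hN⟩) (star (b ⟨0, hN⟩))) := by
  set z : Fin N := ⟨0, hN⟩ with hz_def
  choose pick hpick using fun k => unit_ne_zero (hb k)
  have cross : ∀ k, k ≠ z → ∀ s t, b z s * b k t = b z t * b k s := by
    intro k hk s t
    set x : Fin 2 → Fin 2 → Fin N → Fin 2 :=
      fun s t j => if j = z then s else if j = k then t else pick j with hxdef
    have hxz : ∀ s t, x s t z = s := by intro s t; simp [hxdef]
    have hxk : ∀ s t, x s t k = t := by intro s t; simp [hxdef, hk]
    have hxo : ∀ s t j, j ≠ z → j ≠ k → x s t j = pick j := by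
      intro s t j h1 h2; simp [hxdef, h1, h2]
    have hcomp : ∀ s t, (x s t) ∘ ⇑(Equiv.swap z k) = x t s := by
      intro s t; funext j
      rcases eq_or_ne j z with rfl | hjz
      · simp only [Function.comp_apply, Equiv.swap_apply_left]
        rw [hxk, hxz]
      · rcases eq_or_ne j k with rfl | hjk
        · simp only [Function.comp_apply, Equiv.swap_apply_right]
          rw [hxz, hxk]
        · simp only [Function.comp_apply, Equiv.swap_apply_of_ne_of_ne hjz hjk]
          rw [hxo s t j hjz hjk, hxo t s j hjz hjk]
    have hsplit : ∀ s t, (∏ j, b j (x s t j))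
        = b z s * b k t * ∏ j ∈ (Finset.univ.erase z).erase k, b j (pick j) := by
      intro s t
      rw [← Finset.mul_prod_erase Finset.univ _ (Finset.mem_univ z),
        ← Finset.mul_prod_erase (Finset.univ.erase z) _
          (Finset.mem_erase.mpr ⟨hk, Finset.mem_univ k⟩), hxz, hxk, ← mul_assoc]
      congr 1
      apply Finset.prod_congr rfl
      intro j hj
      have hjk : j ≠ k := (Finset.mem_erase.mp hj).1
      have hjz : j ≠ z := (Finset.mem_erase.mp (Finset.mem_of_mem_erase hj)).1
      rw [hxo s t j hjz hjk]
    have hC : (∏ j ∈ (Finset.univ.erase z).erase k, b j (pick j)) ≠ 0 :=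
      Finset.prod_ne_zero_iff.mpr fun j _ => hpick j
    have h1 := hsymm (Equiv.swap z k) (x s t)
    rw [hcomp s t, hsplit s t, hsplit t s] at h1
    exact (mul_right_cancel₀ hC h1).symm
  obtain ⟨j0, hj0⟩ := unit_ne_zero (hb z)
  set μ : Fin N → ℂ := fun k => b k j0 / b z j0 with hμ
  have hbk : ∀ k t, b k t = μ k * b z t := by
    intro k t
    rcases eq_or_ne k z with rfl | hk
    · rw [hμ]; field_simp
    · have h := cross k hk j0 t
      rw [hμ]
      field_simp
      linear_combination h
  have hBfac : ∀ x : Fin N → Fin 2, (∏ k, b k (x k)) = (∏ k, μ k) * ∏ k, b z (x k) := by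
    intro x
    rw [← Finset.prod_mul_distrib]
    exact Finset.prod_congr rfl fun k _ => hbk k (x k)
  have hzunit : star (fun x : Fin N → Fin 2 => ∏ k, b z (x k))
      ⬝ᵥ (fun x => ∏ k, b z (x k)) = 1 := unit_prod N (fun _ => b z) (fun _ => hb z)
  have hc : star (∏ k, μ k) * (∏ k, μ k) = 1 := by
    have key : (star (fun x : Fin N → Fin 2 => ∏ k, b k (x k)) ⬝ᵥ fun x => ∏ k, b k (x k))
        = star (∏ k, μ k) * (∏ k, μ k) *
          (star (fun x : Fin N → Fin 2 => ∏ k, b z (x k)) ⬝ᵥ fun x => ∏ k, b z (x k)) := by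
      simp only [dotProduct, Pi.star_apply, Finset.mul_sum]
      apply Finset.sum_congr rfl
      intro x _
      rw [hBfac x, star_mul']
      ring
    rw [unit_prod N b hb, hzunit, mul_one] at key
    exact key.symm
  ext x y
  simp only [vecMulVec_apply, tensorProd, of_apply, Pi.star_apply]
  have hr : ∏ k : Fin N, b z (x k) * star (b z (y k))
      = (∏ k, b z (x k)) * star (∏ k, b z (y k)) := by
    rw [star_prod, Finset.prod_mul_distrib]
  rw [hBfac x, hBfac y, hr, star_mul']
  linear_combination ((∏ k, b z (x k)) * star (∏ k, b z (y k))) * hc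

theorem stmt10
    (N : ℕ)
    (ρ : Matrix (Fin N → Fin 2) (Fin N → Fin 2) ℂ)
    (hpsd : ρ.PosSemidef) (htr : ρ.trace = 1)
    (hsym : symProj N * ρ * symProj N = ρ) :
    (∃ (m : ℕ) (lam : Fin m → ℝ)
        (τ : Fin m → Fin N → Matrix (Fin 2) (Fin 2) ℂ),
        (∀ i, 0 ≤ lam i) ∧
        (∀ i k, (τ i k).PosSemidef ∧ (τ i k).trace = 1) ∧
        ρ = ∑ i, (lam i : ℂ) • tensorProd (τ i)) ↔
    (∃ (m : ℕ) (w : Fin m → ℝ) (α : Fin m → Fin 2 → ℂ),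
        (∀ i, 0 ≤ w i) ∧ (∀ i, star (α i) ⬝ᵥ α i = 1) ∧
        ρ = ∑ i, (w i : ℂ) •
          tensorProd (fun _ => vecMulVec (α i) (star (α i)))) := by
  constructor
  · rintro ⟨m, lam, τ, hlam, hτ, hρ⟩
    rcases Nat.eq_zero_or_pos N with hN0 | hN
    · subst hN0
      refine ⟨1, fun _ => 1, fun _ => ![1, 0], fun _ => zero_le_one, ?_, ?_⟩
      · intro i
        simp [dotProduct, Fin.sum_univ_two]
      · have h1 : ρ = Matrix.of fun _ _ => (1 : ℂ) := by
          ext x y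
          have hx : x = default := Subsingleton.elim x default
          have hy : y = default := Subsingleton.elim y default
          have ht : ρ.trace = ρ default default := by
            rw [Matrix.trace, Fintype.sum_unique, Matrix.diag_apply]
            congr 1 <;> exact Subsingleton.elim _ _
          rw [hx, hy, of_apply, ← ht, htr]
        rw [h1]
        ext x y
        simp [tensorProd]
    · -- main case N > 0
      obtain ⟨e, u, he, hu, hτeq⟩ :
          ∃ (e : Fin m → Fin N → Fin 2 → ℝ) (u : Fin m → Fin N → Fin 2 → Fin 2 → ℂ),
            (∀ i k j, 0 ≤ e i k j) ∧ (∀ i k j, star (u i k j) ⬝ᵥ u i k j = 1) ∧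
            ∀ i k, τ i k = ∑ j, (e i k j : ℂ) • vecMulVec (u i k j) (star (u i k j)) := by
        choose e u h1 h2 h3 using fun i k => psd_sum_rank_one (hτ i k).1
        exact ⟨e, u, fun i k => h1 i k, fun i k => h2 i k, h3⟩
      set z : Fin N := ⟨0, hN⟩ with hzdef
      set W : Fin m × (Fin N → Fin 2) → ℝ := fun p => lam p.1 * ∏ k, e p.1 k (p.2 k) with hWdef
      set B : Fin m × (Fin N → Fin 2) → (Fin N → Fin 2) → ℂ :=
        fun p x => ∏ k, u p.1 k (p.2 k) (x k) with hBdef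
      have hWnn : ∀ p, 0 ≤ W p := fun p =>
        mul_nonneg (hlam p.1) (Finset.prod_nonneg fun k _ => he p.1 k (p.2 k))
      have hBunit : ∀ p, star (B p) ⬝ᵥ B p = 1 := fun p =>
        unit_prod N (fun k => u p.1 k (p.2 k)) (fun k => hu p.1 k (p.2 k))
      have hρ2 : ρ = ∑ p : Fin m × (Fin N → Fin 2),
          (W p : ℂ) • vecMulVec (B p) (star (B p)) := by
        rw [hρ, Fintype.sum_prod_type]
        apply Finset.sum_congr rfl
        intro i _
        have hτi : τ i = fun k => ∑ j, (e i k j : ℂ) • vecMulVec (u i k j) (star (u i k j)) :=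
          funext fun k => hτeq i k
        rw [hτi, tensorProd_sum, Finset.smul_sum]
        apply Finset.sum_congr rfl
        intro f _
        rw [tensorProd_smul_outer N (fun k => (e i k (f k) : ℂ)) (fun k => u i k (f k)),
          smul_smul]
        congr 1
        simp only [hWdef]
        push_cast
        ring
      set Q : Matrix (Fin N → Fin 2) (Fin N → Fin 2) ℂ := 1 - symProj N with hQdef
      have hQH : Qᴴ = Q := by
        rw [hQdef, conjTranspose_sub, conjTranspose_one, symProj_conjTranspose]
      have hQρ : Q * ρ * Q = 0 := by
        conv_lhs => rw [← hsym]
        have hQP : Q * symProj N = 0 := by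
          rw [hQdef, Matrix.sub_mul, Matrix.one_mul, symProj_mul_self, sub_self]
        have hPQ : symProj N * Q = 0 := by
          rw [hQdef, Matrix.mul_sub, Matrix.mul_one, symProj_mul_self, sub_self]
        calc Q * (symProj N * ρ * symProj N) * Q
            = (Q * symProj N) * ρ * (symProj N * Q) := by
              simp only [Matrix.mul_assoc]
          _ = 0 := by rw [hQP, hPQ, Matrix.zero_mul, Matrix.mul_zero]
      have hQρ2 : ∑ p : Fin m × (Fin N → Fin 2),
          (W p : ℂ) • vecMulVec (Q *ᵥ B p) (star (Q *ᵥ B p)) = 0 := by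
        rw [← hQρ]
        conv_rhs => rw [hρ2]
        rw [Matrix.mul_sum, Matrix.sum_mul]
        apply Finset.sum_congr rfl
        intro p _
        rw [mul_smul_comm, smul_mul_assoc, conj_outer Q hQH]
      have hzero : ∀ p, W p ≠ 0 → Q *ᵥ B p = 0 := by
        intro p hWp
        funext x
        have hdiag := congrFun (congrFun hQρ2 x) x
        simp only [Matrix.sum_apply, Matrix.smul_apply, vecMulVec_apply, Pi.star_apply,
          smul_eq_mul, Matrix.zero_apply] at hdiag
        have hterm : ∀ q : Fin m × (Fin N → Fin 2),
            (W q : ℂ) * ((Q *ᵥ B q) x * star ((Q *ᵥ B q) x))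
            = ((W q * Complex.normSq ((Q *ᵥ B q) x) : ℝ) : ℂ) := by
          intro q
          rw [Complex.star_def, Complex.mul_conj]
          push_cast
          ring
        rw [Finset.sum_congr rfl fun q _ => hterm q, ← Complex.ofReal_sum] at hdiag
        have hreal : ∑ q : Fin m × (Fin N → Fin 2),
            W q * Complex.normSq ((Q *ᵥ B q) x) = 0 := by
          exact_mod_cast hdiag
        have hallzero := (Finset.sum_eq_zero_iff_of_nonneg
          (fun q _ => mul_nonneg (hWnn q) (Complex.normSq_nonneg _))).mp hreal
        have := hallzero p (Finset.mem_univ p)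
        have hns : Complex.normSq ((Q *ᵥ B p) x) = 0 := by
          rcases mul_eq_zero.mp this with h | h
          · exact absurd h hWp
          · exact h
        simpa using Complex.normSq_eq_zero.mp hns
      have hsymB : ∀ p, W p ≠ 0 → ∀ (σ : Equiv.Perm (Fin N)) (x : Fin N → Fin 2),
          B p (x ∘ ⇑σ) = B p x := by
        intro p hWp σ
        have hPB : symProj N *ᵥ B p = B p := by
          have h0 := hzero p hWp
          rw [hQdef, Matrix.sub_mulVec, Matrix.one_mulVec, sub_eq_zero] at h0
          exact h0.symm
        have hperm : permOp N σ *ᵥ B p = B p := by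
          conv_lhs => rw [← hPB]
          rw [Matrix.mulVec_mulVec, permOp_mul_symProj, hPB]
        rw [permOp_mulVec] at hperm
        intro x
        exact congrFun hperm x
      refine ⟨Fintype.card (Fin m × (Fin N → Fin 2)),
        fun i => W ((Fintype.equivFin (Fin m × (Fin N → Fin 2))).symm i),
        fun i => u ((Fintype.equivFin (Fin m × (Fin N → Fin 2))).symm i).1 z
          (((Fintype.equivFin (Fin m × (Fin N → Fin 2))).symm i).2 z),
        fun i => hWnn _, fun i => hu _ _ _, ?_⟩
      rw [hρ2]
      rw [show (∑ i : Fin (Fintype.card (Fin m × (Fin N → Fin 2))),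
          ((W ((Fintype.equivFin (Fin m × (Fin N → Fin 2))).symm i) : ℝ) : ℂ) •
            tensorProd (fun _ =>
              vecMulVec (u ((Fintype.equivFin (Fin m × (Fin N → Fin 2))).symm i).1 z
                  (((Fintype.equivFin (Fin m × (Fin N → Fin 2))).symm i).2 z))
                (star (u ((Fintype.equivFin (Fin m × (Fin N → Fin 2))).symm i).1 z
                  (((Fintype.equivFin (Fin m × (Fin N → Fin 2))).symm i).2 z)))))
          = ∑ p : Fin m × (Fin N → Fin 2), ((W p : ℝ) : ℂ) •
              tensorProd (fun _ => vecMulVec (u p.1 z (p.2 z)) (star (u p.1 z (p.2 z))))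
        from Equiv.sum_comp (Fintype.equivFin (Fin m × (Fin N → Fin 2))).symm
          (fun p => ((W p : ℝ) : ℂ) • tensorProd
            (fun _ => vecMulVec (u p.1 z (p.2 z)) (star (u p.1 z (p.2 z)))))]
      apply Finset.sum_congr rfl
      intro p _
      rcases eq_or_ne (W p) 0 with h0 | h0
      · rw [h0]; simp
      · congr 1
        exact symm_prod_outer N hN (fun k => u p.1 k (p.2 k))
          (fun k => hu p.1 k (p.2 k)) (fun σ x => hsymB p h0 σ x)
  · rintro ⟨m, w, α, hw, hα, hρ⟩
    exact ⟨m, w, fun i _ => vecMulVec (α i) (star (α i)), hw,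
      fun i k => ⟨outer_posSemidef (α i), outer_trace (α i) (hα i)⟩, hρ⟩
end

section
/- If ρ on (ℂ²)^{⊗2j} is a convex combination ρ = Σ_i w_i (|α_i⟩⟨α_i|)^{⊗2j} with w_i ≥ 0, then the matrix T_{μ,ν} = X_{μ_1…μ_j ν_1…ν_j} (with X the Pauli expansion coefficients of ρ) is positive semidefinite. -/
open Matrix

noncomputable def pauli : Fin 4 → Matrix (Fin 2) (Fin 2) ℂ :=
  ![(1 : Matrix (Fin 2) (Fin 2) ℂ),
    !![0, 1; 1, 0],
    !![0, -Complex.I; Complex.I, 0],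
    !![1, 0; 0, -1]]

noncomputable def pauliTensor {j : ℕ} (μ ν : Fin j → Fin 4) :
    Matrix ((Fin j → Fin 2) × (Fin j → Fin 2)) ((Fin j → Fin 2) × (Fin j → Fin 2)) ℂ :=
  Matrix.of fun a c =>
    (∏ k, pauli (μ k) (a.1 k) (c.1 k)) * ∏ k, pauli (ν k) (a.2 k) (c.2 k)

/-- `(|α⟩⟨α|)^{⊗2j}` as a matrix on `(ℂ²)^{⊗2j}`. -/
noncomputable def cohProj {j : ℕ} (α : Fin 2 → ℂ) :
    Matrix ((Fin j → Fin 2) × (Fin j → Fin 2)) ((Fin j → Fin 2) × (Fin j → Fin 2)) ℂ :=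
  Matrix.of fun a c =>
    (∏ k, α (a.1 k) * star (α (c.1 k))) * ∏ k, α (a.2 k) * star (α (c.2 k))

noncomputable def nC (α : Fin 2 → ℂ) (p : Fin 4) : ℂ :=
  ∑ x, ∑ y, α x * star (α y) * pauli p y x

lemma pauli_herm (p : Fin 4) (x y : Fin 2) : star (pauli p y x) = pauli p x y := by
  fin_cases p <;> fin_cases x <;> fin_cases y <;>
    simp [pauli, Matrix.one_apply]

lemma nC_real (α : Fin 2 → ℂ) (p : Fin 4) : ((nC α p).re : ℂ) = nC α p := by
  rw [← Complex.conj_eq_iff_re]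
  unfold nC
  rw [map_sum, Finset.sum_comm]
  congr 1; ext x; rw [map_sum]; congr 1; ext y
  rw [_root_.map_mul, _root_.map_mul]
  rw [show (starRingEnd ℂ) (pauli p y x) = star (pauli p y x) from rfl, pauli_herm]
  rw [show (starRingEnd ℂ) (star (α y)) = α y by simp, show (starRingEnd ℂ) (α x) = star (α x) from rfl]
  ring

lemma factor_sum {j : ℕ} (α : Fin 2 → ℂ) (μ : Fin j → Fin 4) :
    ∑ a : Fin j → Fin 2, ∑ c : Fin j → Fin 2,
      ∏ k, (α (a k) * star (α (c k)) * pauli (μ k) (c k) (a k))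
    = ∏ k, nC α (μ k) := by
  rw [show (∏ k, nC α (μ k)) = ∏ k, ∑ x, ∑ y, α x * star (α y) * pauli (μ k) y x from rfl,
    Fintype.prod_sum]
  refine Finset.sum_congr rfl fun a _ => ?_
  rw [Fintype.prod_sum]

lemma trace_cohProj_pauli {j : ℕ} (α : Fin 2 → ℂ) (μ ν : Fin j → Fin 4) :
    ((cohProj (j := j) α) * pauliTensor μ ν).trace
      = (∏ k, nC α (μ k)) * (∏ k, nC α (ν k)) := by
  rw [Matrix.trace, ← factor_sum α μ, ← factor_sum α ν]
  simp only [Matrix.diag_apply, Matrix.mul_apply, cohProj, pauliTensor, Matrix.of_apply]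
  rw [Fintype.sum_prod_type, Finset.sum_mul_sum]
  refine Finset.sum_congr rfl fun a1 _ => ?_
  refine Finset.sum_congr rfl fun a2 _ => ?_
  rw [Fintype.sum_prod_type, Finset.sum_mul_sum]
  refine Finset.sum_congr rfl fun c1 _ => ?_
  refine Finset.sum_congr rfl fun c2 _ => ?_
  simp only [← Finset.prod_mul_distrib]
  exact Finset.prod_congr rfl fun k _ => by ring

lemma psd_smul {N : Type*} [Fintype N] {M : Matrix N N ℝ} (hM : M.PosSemidef)
    {c : ℝ} (hc : 0 ≤ c) : (c • M).PosSemidef := by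
  refine ⟨?_, fun x => ?_⟩
  · unfold Matrix.IsHermitian
    rw [Matrix.conjTranspose_smul, hM.1]
    simp
  · have h := mul_nonneg hc (hM.2 x)
    simp only [Finsupp.sum, Finset.mul_sum, Matrix.smul_apply, smul_eq_mul] at h ⊢
    exact le_of_le_of_eq h (Finset.sum_congr rfl fun i _ => Finset.sum_congr rfl fun j _ => by ring)

lemma psd_vecMulVec {N : Type*} [Fintype N] [DecidableEq N] (f : N → ℝ) :
    (Matrix.vecMulVec f f).PosSemidef := by
  have h := Matrix.posSemidef_conjTranspose_mul_self (Matrix.replicateRow Unit f)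
  have : (Matrix.replicateRow Unit f)ᴴ * Matrix.replicateRow Unit f = Matrix.vecMulVec f f := by
    rw [Matrix.vecMulVec_eq Unit, Matrix.conjTranspose_replicateRow]
    simp
  rwa [this] at h

theorem stmt16
    (j m : ℕ)
    (w : Fin m → ℝ) (hw : ∀ i, 0 ≤ w i)
    (α : Fin m → Fin 2 → ℂ) (hα : ∀ i, star (α i) ⬝ᵥ α i = 1)
    (ρ : Matrix ((Fin j → Fin 2) × (Fin j → Fin 2)) ((Fin j → Fin 2) × (Fin j → Fin 2)) ℂ)
    (hρ : ρ = ∑ i, (w i : ℂ) • cohProj (α i))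
    (T : Matrix (Fin j → Fin 4) (Fin j → Fin 4) ℝ)
    (hT : ∀ μ ν, (T μ ν : ℂ) = (ρ * pauliTensor μ ν).trace) :
    T.PosSemidef := by
  set n : Fin m → Fin 4 → ℝ := fun i p => (nC (α i) p).re with hn_def
  have hn : ∀ i p, ((n i p : ℝ) : ℂ) = nC (α i) p := fun i p => nC_real _ _
  have key : T = ∑ i, w i • Matrix.vecMulVec (fun μ => ∏ k, n i (μ k))
      (fun μ => ∏ k, n i (μ k)) := by
    ext μ ν
    apply Complex.ofReal_injective
    rw [hT, hρ, Finset.sum_mul, Matrix.trace_sum]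
    simp only [Matrix.smul_mul, Matrix.trace_smul, smul_eq_mul, trace_cohProj_pauli]
    simp only [Matrix.sum_apply, Matrix.smul_apply, Matrix.vecMulVec_apply, smul_eq_mul]
    push_cast
    simp only [hn]
  rw [key]
  refine Finset.sum_induction _ _ (fun A B hA hB => hA.add hB) ?_ ?_
  · exact ⟨Matrix.isHermitian_zero, fun x => by simp⟩
  · intro i _
    exact psd_smul (psd_vecMulVec _) (hw i)
end
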